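/- Fix an integer r > 0 and suppose Assumptions (S1) (with α = 1), (S2) and (S3) hold with some q ≥ 2 (the (S1) bounds holding for all indices t with t−r ≥ 1). Define γ(u,r) := Cov(X̃_t(u), X̃_{t−r}(u)) (independent of t by stationarity). Then there is a constant C > 0 such that uniformly for r < t ≤ n: |Cov(X_{t,n}, X_{t−r,n}) − γ(t/n, r)| ≤ C n^{−1}; moreover u ↦ γ(u,r) is continuously differentiable on [0,1] with derivative ∂_u γ(u,r) = Cov(∂_u X̃_0(u), X̃_r(u)) + Cov(X̃_0(u), ∂_u X̃_r(u)). -/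

import Mathlib

open MeasureTheory Filter Set

noncomputable section

/-- The two-sided shift on `ℤ → ℝ`. -/
def shiftZ : (ℤ → ℝ) → (ℤ → ℝ) := fun x t => x (t + 1)

/-- Stationarity and ergodicity of a real-valued process indexed by `ℤ`. -/
def StatErg {Ω : Type*} [MeasurableSpace Ω] (μ : Measure Ω) (X : ℤ → Ω → ℝ) : Prop :=
  Ergodic shiftZ (Measure.map (fun ω t => X t ω) μ)

/-- Covariance of two real random variables. -/
def covar {Ω : Type*} [MeasurableSpace Ω] (μ : Measure Ω) (f g : Ω → ℝ) : ℝ :=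
  ∫ ω, (f ω - ∫ x, f x ∂μ) * (g ω - ∫ x, g x ∂μ) ∂μ

section Helpers

open Topology

variable {Ω : Type*} [MeasurableSpace Ω] {μ : Measure Ω} [IsProbabilityMeasure μ]

lemma two_le_ofReal_q {q : ℝ} (hq : 2 ≤ q) : (2 : ENNReal) ≤ ENNReal.ofReal q := by
  rw [show (2 : ENNReal) = ENNReal.ofReal 2 by norm_num]
  exact ENNReal.ofReal_le_ofReal hq

lemma memL2_of_q {f : Ω → ℝ} {q : ℝ} (hq : 2 ≤ q) (hm : AEStronglyMeasurable f μ)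
    (h : eLpNorm f (ENNReal.ofReal q) μ < ⊤) : MemLp f 2 μ :=
  ⟨hm, lt_of_le_of_lt (eLpNorm_le_eLpNorm_of_exponent_le (two_le_ofReal_q hq) hm) h⟩

lemma one_div_one_eq : (1:ENNReal)/1 = 1/2 + 1/2 := by
  rw [ENNReal.div_add_div_same, one_div_one, one_add_one_eq_two]
  exact (ENNReal.div_self two_ne_zero ENNReal.ofNat_ne_top).symm

lemma L2.integrable_mul' {f g : Ω → ℝ} (hf : MemLp f 2 μ) (hg : MemLp g 2 μ) :
    Integrable (fun ω => f ω * g ω) μ := by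
  have h : MemLp (f • g) 1 μ := hg.smul hf
  exact memLp_one_iff_integrable.mp h

lemma abs_integral_le_L1 {f : Ω → ℝ} (hf : Integrable f μ) :
    |∫ ω, f ω ∂μ| ≤ (eLpNorm f 1 μ).toReal := by
  rw [eLpNorm_one_eq_lintegral_enorm, ← integral_norm_eq_lintegral_enorm hf.aestronglyMeasurable]
  exact (norm_integral_le_integral_norm f)

lemma abs_integral_mul_le {f g : Ω → ℝ} (hf : MemLp f 2 μ) (hg : MemLp g 2 μ) :
    |∫ ω, f ω * g ω ∂μ| ≤ (eLpNorm f 2 μ).toReal * (eLpNorm g 2 μ).toReal := by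
  have h1 : eLpNorm (f • g) 1 μ ≤ eLpNorm f 2 μ * eLpNorm g 2 μ :=
    eLpNorm_smul_le_mul_eLpNorm hg.1 hf.1
  calc |∫ ω, f ω * g ω ∂μ| ≤ (eLpNorm (fun ω => f ω * g ω) 1 μ).toReal :=
        abs_integral_le_L1 (L2.integrable_mul' hf hg)
    _ ≤ (eLpNorm f 2 μ * eLpNorm g 2 μ).toReal := by
        apply ENNReal.toReal_mono (ENNReal.mul_ne_top hf.2.ne hg.2.ne)
        exact h1
    _ = (eLpNorm f 2 μ).toReal * (eLpNorm g 2 μ).toReal := ENNReal.toReal_mul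

lemma abs_integral_le_L2 {f : Ω → ℝ} (hf : MemLp f 2 μ) :
    |∫ ω, f ω ∂μ| ≤ (eLpNorm f 2 μ).toReal := by
  refine le_trans (abs_integral_le_L1 (hf.integrable one_le_two)) ?_
  exact ENNReal.toReal_mono hf.2.ne
    (eLpNorm_le_eLpNorm_of_exponent_le (by norm_num) hf.1)

lemma covar_eq_sub {f g : Ω → ℝ} (hf : MemLp f 2 μ) (hg : MemLp g 2 μ) :
    covar μ f g = (∫ ω, f ω * g ω ∂μ) - (∫ ω, f ω ∂μ) * (∫ ω, g ω ∂μ) := by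
  have hfi : Integrable f μ := hf.integrable one_le_two
  have hgi : Integrable g μ := hg.integrable one_le_two
  have hfg : Integrable (fun ω => f ω * g ω) μ := L2.integrable_mul' hf hg
  set a := ∫ x, f x ∂μ with ha
  set b := ∫ x, g x ∂μ with hb
  have key : ∀ ω, (f ω - a) * (g ω - b) = f ω * g ω - a * g ω - b * f ω + a * b := by
    intro ω; ring
  have i1 : Integrable (fun ω => a * g ω) μ := hgi.const_mul a
  have i2 : Integrable (fun ω => b * f ω) μ := hfi.const_mul b
  have i3 : Integrable (fun ω => f ω * g ω - a * g ω) μ := hfg.sub i1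
  have i4 : Integrable (fun ω => f ω * g ω - a * g ω - b * f ω) μ := i3.sub i2
  unfold covar
  rw [← ha, ← hb]
  simp_rw [key]
  rw [integral_add i4 (integrable_const _), integral_sub i3 i2, integral_sub hfg i1,
    MeasureTheory.integral_const_mul, MeasureTheory.integral_const_mul, integral_const]
  simp [measure_univ, ← ha, ← hb]
  ring

lemma toReal_eLpNorm_le {f : Ω → ℝ} {c : ℝ} (hc : 0 ≤ c)
    (h : eLpNorm f 2 μ ≤ ENNReal.ofReal c) : (eLpNorm f 2 μ).toReal ≤ c :=
  ENNReal.toReal_le_of_le_ofReal hc h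

lemma covar_diff_bound {f f' g g' : Ω → ℝ}
    (hf : MemLp f 2 μ) (hf' : MemLp f' 2 μ) (hg : MemLp g 2 μ) (hg' : MemLp g' 2 μ)
    {a b c d : ℝ} (ha0 : 0 ≤ a) (hb0 : 0 ≤ b) (hc0 : 0 ≤ c) (hd0 : 0 ≤ d)
    (ha : eLpNorm (fun ω => f ω - f' ω) 2 μ ≤ ENNReal.ofReal a)
    (hb : eLpNorm g 2 μ ≤ ENNReal.ofReal b)
    (hc : eLpNorm f' 2 μ ≤ ENNReal.ofReal c)
    (hd : eLpNorm (fun ω => g ω - g' ω) 2 μ ≤ ENNReal.ofReal d) :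
    |covar μ f g - covar μ f' g'| ≤ 2 * a * b + 2 * c * d := by
  have hdf : MemLp (fun ω => f ω - f' ω) 2 μ := hf.sub hf'
  have hdg : MemLp (fun ω => g ω - g' ω) 2 μ := hg.sub hg'
  have e1 : |∫ ω, (f ω - f' ω) * g ω ∂μ| ≤ a * b := by
    refine le_trans (abs_integral_mul_le hdf hg) ?_
    exact mul_le_mul (toReal_eLpNorm_le ha0 ha) (toReal_eLpNorm_le hb0 hb)
      ENNReal.toReal_nonneg ha0
  have e2 : |∫ ω, f' ω * (g ω - g' ω) ∂μ| ≤ c * d := by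
    refine le_trans (abs_integral_mul_le hf' hdg) ?_
    exact mul_le_mul (toReal_eLpNorm_le hc0 hc) (toReal_eLpNorm_le hd0 hd)
      ENNReal.toReal_nonneg hc0
  have e3 : |(∫ ω, (f ω - f' ω) ∂μ)| ≤ a := le_trans (abs_integral_le_L2 hdf)
    (toReal_eLpNorm_le ha0 ha)
  have e4 : |(∫ ω, g ω ∂μ)| ≤ b := le_trans (abs_integral_le_L2 hg)
    (toReal_eLpNorm_le hb0 hb)
  have e5 : |(∫ ω, f' ω ∂μ)| ≤ c := le_trans (abs_integral_le_L2 hf')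
    (toReal_eLpNorm_le hc0 hc)
  have e6 : |(∫ ω, (g ω - g' ω) ∂μ)| ≤ d := le_trans (abs_integral_le_L2 hdg)
    (toReal_eLpNorm_le hd0 hd)
  have hfi := hf.integrable one_le_two
  have hfi' := hf'.integrable one_le_two
  have hgi := hg.integrable one_le_two
  have hgi' := hg'.integrable one_le_two
  rw [covar_eq_sub hf hg, covar_eq_sub hf' hg']
  have key : (∫ ω, f ω * g ω ∂μ) - (∫ ω, f' ω * g' ω ∂μ)
      = (∫ ω, (f ω - f' ω) * g ω ∂μ) + ∫ ω, f' ω * (g ω - g' ω) ∂μ := by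
    have k1 : ∫ ω, (f ω - f' ω) * g ω ∂μ = (∫ ω, f ω * g ω ∂μ) - ∫ ω, f' ω * g ω ∂μ := by
      simp_rw [sub_mul]
      exact integral_sub (L2.integrable_mul' hf hg) (L2.integrable_mul' hf' hg)
    have k2 : ∫ ω, f' ω * (g ω - g' ω) ∂μ = (∫ ω, f' ω * g ω ∂μ) - ∫ ω, f' ω * g' ω ∂μ := by
      simp_rw [mul_sub]
      exact integral_sub (L2.integrable_mul' hf' hg) (L2.integrable_mul' hf' hg')
    rw [k1, k2]; ring
  have key2 : (∫ ω, f ω ∂μ) * (∫ ω, g ω ∂μ) - (∫ ω, f' ω ∂μ) * (∫ ω, g' ω ∂μ)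
      = (∫ ω, (f ω - f' ω) ∂μ) * (∫ ω, g ω ∂μ)
        + (∫ ω, f' ω ∂μ) * ∫ ω, (g ω - g' ω) ∂μ := by
    rw [integral_sub hfi hfi', integral_sub hgi hgi']; ring
  have : (∫ ω, f ω * g ω ∂μ) - (∫ ω, f ω ∂μ) * ∫ ω, g ω ∂μ
      - ((∫ ω, f' ω * g' ω ∂μ) - (∫ ω, f' ω ∂μ) * ∫ ω, g' ω ∂μ)
      = ((∫ ω, (f ω - f' ω) * g ω ∂μ) + ∫ ω, f' ω * (g ω - g' ω) ∂μ)
        - ((∫ ω, (f ω - f' ω) ∂μ) * (∫ ω, g ω ∂μ)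
           + (∫ ω, f' ω ∂μ) * ∫ ω, (g ω - g' ω) ∂μ) := by
    rw [← key, ← key2]; ring
  rw [this]
  calc |_| ≤ |(∫ ω, (f ω - f' ω) * g ω ∂μ) + ∫ ω, f' ω * (g ω - g' ω) ∂μ|
      + |(∫ ω, (f ω - f' ω) ∂μ) * (∫ ω, g ω ∂μ)
         + (∫ ω, f' ω ∂μ) * ∫ ω, (g ω - g' ω) ∂μ| := abs_sub _ _
    _ ≤ (a * b + c * d) + (a * b + c * d) := by
        gcongr
        · exact le_trans (abs_add_le _ _) (add_le_add e1 e2)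
        · refine le_trans (abs_add_le _ _) (add_le_add ?_ ?_)
          · rw [abs_mul]
            exact mul_le_mul e3 e4 (abs_nonneg _) ha0
          · rw [abs_mul]
            exact mul_le_mul e5 e6 (abs_nonneg _) hc0
    _ = 2 * a * b + 2 * c * d := by ring


lemma shiftZ_measurable : Measurable shiftZ :=
  measurable_pi_lambda _ fun t => measurable_pi_apply (t + 1)

lemma shiftZ_iterate (k : ℕ) (x : ℤ → ℝ) (s : ℤ) : (shiftZ^[k]) x s = x (s + k) := by
  induction k generalizing x s with
  | zero => simp
  | succ n ih =>
    rw [Function.iterate_succ_apply, ih]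
    simp [shiftZ]
    ring_nf

lemma covar_map {κ : Type*} [MeasurableSpace κ] {ν : Measure Ω} {Φ : Ω → κ}
    (hΦ : Measurable Φ) {a b : κ → ℝ} (ha : Measurable a) (hb : Measurable b) :
    covar ν (fun ω => a (Φ ω)) (fun ω => b (Φ ω)) = covar (Measure.map Φ ν) a b := by
  unfold covar
  rw [integral_map hΦ.aemeasurable ha.aestronglyMeasurable,
    integral_map hΦ.aemeasurable hb.aestronglyMeasurable,
    integral_map hΦ.aemeasurable]
  exact (((ha.sub measurable_const).mul (hb.sub measurable_const)).aestronglyMeasurable)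

lemma stat_covar {Xt : ℤ → Ω → ℝ} (hmeas : ∀ t, Measurable (Xt t))
    (hs : StatErg μ Xt) (a b : ℤ) (m : ℕ) :
    covar μ (Xt (a + m)) (Xt (b + m)) = covar μ (Xt a) (Xt b) := by
  set Φ : Ω → (ℤ → ℝ) := fun ω t => Xt t ω with hΦdef
  have hΦ : Measurable Φ := measurable_pi_lambda _ hmeas
  have hsh : Measurable (shiftZ^[m]) := shiftZ_measurable.iterate m
  have h1 : covar μ (Xt (a + m)) (Xt (b + m))
      = covar (Measure.map Φ μ) (fun x => x (a + m)) (fun x => x (b + m)) :=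
    covar_map hΦ (measurable_pi_apply _) (measurable_pi_apply _)
  have h2 : covar μ (Xt a) (Xt b)
      = covar (Measure.map Φ μ) (fun x => x a) (fun x => x b) :=
    covar_map hΦ (measurable_pi_apply _) (measurable_pi_apply _)
  have hmp : MeasurePreserving (shiftZ^[m]) (Measure.map Φ μ) (Measure.map Φ μ) :=
    hs.toMeasurePreserving.iterate m
  have h3 : covar (Measure.map Φ μ) (fun x => x (a + m)) (fun x => x (b + m))
      = covar (Measure.map (shiftZ^[m]) (Measure.map Φ μ)) (fun x => x a) (fun x => x b) := by
    rw [← covar_map hsh (measurable_pi_apply a) (measurable_pi_apply b)]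
    congr 1 <;> funext x <;> rw [shiftZ_iterate]
  rw [h1, h3, hmp.map_eq, ← h2]

lemma stat_eLpNorm {Xt : ℤ → Ω → ℝ} (hmeas : ∀ t, Measurable (Xt t))
    (hs : StatErg μ Xt) (m : ℕ) (p : ENNReal) :
    eLpNorm (Xt (m : ℤ)) p μ = eLpNorm (Xt 0) p μ := by
  set Φ : Ω → (ℤ → ℝ) := fun ω t => Xt t ω with hΦdef
  have hΦ : Measurable Φ := measurable_pi_lambda _ hmeas
  have hsh : Measurable (shiftZ^[m]) := shiftZ_measurable.iterate m
  have hmp : MeasurePreserving (shiftZ^[m]) (Measure.map Φ μ) (Measure.map Φ μ) :=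
    hs.toMeasurePreserving.iterate m
  have h1 : eLpNorm (Xt (m : ℤ)) p μ = eLpNorm (fun x : ℤ → ℝ => x (m : ℤ)) p (Measure.map Φ μ) :=
    (eLpNorm_map_measure (measurable_pi_apply _).aestronglyMeasurable hΦ.aemeasurable).symm
  have h2 : eLpNorm (Xt 0) p μ = eLpNorm (fun x : ℤ → ℝ => x 0) p (Measure.map Φ μ) :=
    (eLpNorm_map_measure (measurable_pi_apply _).aestronglyMeasurable hΦ.aemeasurable).symm
  have h3 : eLpNorm (fun x : ℤ → ℝ => x (m : ℤ)) p (Measure.map Φ μ)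
      = eLpNorm (fun x : ℤ → ℝ => x 0) p (Measure.map (shiftZ^[m]) (Measure.map Φ μ)) := by
    rw [eLpNorm_map_measure (measurable_pi_apply 0).aestronglyMeasurable hsh.aemeasurable]
    congr 1
    funext x
    simp [Function.comp, shiftZ_iterate]
  rw [h1, h3, hmp.map_eq, ← h2]

lemma part1 {X : ℕ → ℕ → Ω → ℝ} {Xt : ℝ → ℤ → Ω → ℝ}
    (hXmeas : ∀ n t, Measurable (X n t)) (hXtmeas : ∀ u t, Measurable (Xt u t))
    (hstat : ∀ u ∈ Icc (0:ℝ) 1, StatErg μ (fun t => Xt u t))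
    (r : ℕ) (hr : 0 < r) (q : ℝ) (hq : 2 ≤ q) (CB : ℝ) (hCB : 0 < CB)
    (M : ℝ) (hM0 : 0 ≤ M)
    (hM : ∀ u ∈ Icc (0:ℝ) 1, eLpNorm (Xt u 0) (ENNReal.ofReal q) μ ≤ ENNReal.ofReal M)
    (hhoelder : ∀ u ∈ Icc (0:ℝ) 1, ∀ v ∈ Icc (0:ℝ) 1, ∀ t : ℤ,
      eLpNorm (fun ω => Xt u t ω - Xt v t ω) (ENNReal.ofReal q) μ
        ≤ ENNReal.ofReal (CB * |u - v|))
    (happrox : ∀ n : ℕ, 1 ≤ n → ∀ t : ℕ, 1 ≤ t → t ≤ n →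
      eLpNorm (fun ω => X n t ω - Xt ((t : ℝ) / (n : ℝ)) (t : ℤ) ω) (ENNReal.ofReal q) μ
        ≤ ENNReal.ofReal (CB * (n : ℝ)⁻¹)) :
    ∃ C : ℝ, 0 < C ∧ ∀ n : ℕ, 1 ≤ n → ∀ t : ℕ, r < t → t ≤ n →
      |covar μ (X n t) (X n (t - r))
          - covar μ (Xt ((t : ℝ) / (n : ℝ)) (r : ℤ)) (Xt ((t : ℝ) / (n : ℝ)) 0)|
        ≤ C * (n : ℝ)⁻¹ := by
  refine ⟨2 * CB * (M + CB * (1 + r)) + 2 * M * (CB * (1 + r)), ?_, ?_⟩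
  · have h1 : (0:ℝ) < M + CB * (1 + r) := by positivity
    have h2 : (0:ℝ) < 2 * CB * (M + CB * (1 + r)) := by positivity
    have h3 : (0:ℝ) ≤ 2 * M * (CB * (1 + r)) := by positivity
    linarith
  intro n hn t hrt htn
  have hn0 : (0:ℝ) < (n:ℝ) := by exact_mod_cast hn
  have hninv0 : (0:ℝ) ≤ (n:ℝ)⁻¹ := by positivity
  have hninv1 : (n:ℝ)⁻¹ ≤ 1 := by
    rw [inv_le_one_iff₀]; right; exact_mod_cast hn
  have ht1 : 1 ≤ t := le_trans hr (le_of_lt hrt)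
  have hrt' : r ≤ t := le_of_lt hrt
  set u : ℝ := (t : ℝ) / (n : ℝ) with hudef
  set v : ℝ := ((t - r : ℕ) : ℝ) / (n : ℝ) with hvdef
  have hu : u ∈ Icc (0:ℝ) 1 := by
    constructor
    · positivity
    · rw [div_le_one hn0]; exact_mod_cast htn
  have hv : v ∈ Icc (0:ℝ) 1 := by
    constructor
    · positivity
    · rw [div_le_one hn0]
      exact_mod_cast le_trans (Nat.sub_le t r) htn
  set p : ENNReal := ENNReal.ofReal q with hpdef
  have h2p : (2:ENNReal) ≤ p := two_le_ofReal_q hq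
  -- cast identities
  have hcast : ((t - r : ℕ) : ℤ) = (t : ℤ) - (r : ℤ) := by
    push_cast [Nat.cast_sub hrt']; ring
  have hcastR : ((t - r : ℕ) : ℝ) = (t : ℝ) - (r : ℝ) := by
    push_cast [Nat.cast_sub hrt']; ring
  -- the stationary comparison functions
  set A : Ω → ℝ := Xt u (t : ℤ) with hAdef
  set B : Ω → ℝ := Xt u ((t : ℤ) - (r : ℤ)) with hBdef
  -- eLpNorm of A and B at p
  have hstatu := hstat u hu
  have hA_p : eLpNorm A p μ ≤ ENNReal.ofReal M := by
    have := stat_eLpNorm (fun s => hXtmeas u s) hstatu t p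
    rw [hAdef, this]
    exact hM u hu
  have hB_p : eLpNorm B p μ ≤ ENNReal.ofReal M := by
    have := stat_eLpNorm (fun s => hXtmeas u s) hstatu (t - r) p
    rw [hBdef, ← hcast, this]
    exact hM u hu
  have hA_2 : eLpNorm A 2 μ ≤ ENNReal.ofReal M :=
    le_trans (eLpNorm_le_eLpNorm_of_exponent_le h2p (hXtmeas u _).aestronglyMeasurable) hA_p
  have hB_2 : eLpNorm B 2 μ ≤ ENNReal.ofReal M :=
    le_trans (eLpNorm_le_eLpNorm_of_exponent_le h2p (hXtmeas u _).aestronglyMeasurable) hB_p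
  have hA_mem : MemLp A 2 μ :=
    ⟨(hXtmeas u _).aestronglyMeasurable, lt_of_le_of_lt hA_2 ENNReal.ofReal_lt_top⟩
  have hB_mem : MemLp B 2 μ :=
    ⟨(hXtmeas u _).aestronglyMeasurable, lt_of_le_of_lt hB_2 ENNReal.ofReal_lt_top⟩
  -- approximation errors
  have hdA_2 : eLpNorm (fun ω => X n t ω - A ω) 2 μ ≤ ENNReal.ofReal (CB * (n:ℝ)⁻¹) := by
    refine le_trans (eLpNorm_le_eLpNorm_of_exponent_le h2p
      ((hXmeas n t).sub (hXtmeas u _)).aestronglyMeasurable) ?_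
    exact happrox n hn t ht1 htn
  have hw1 : eLpNorm (fun ω => X n (t - r) ω - Xt v ((t - r : ℕ) : ℤ) ω) p μ
      ≤ ENNReal.ofReal (CB * (n:ℝ)⁻¹) := happrox n hn (t - r) (by omega) (by omega)
  have hvu : |v - u| = (r : ℝ) * (n:ℝ)⁻¹ := by
    rw [hvdef, hudef, hcastR, div_sub_div_same]
    rw [abs_div, abs_of_nonneg (le_of_lt hn0)]
    rw [show (t:ℝ) - (r:ℝ) - (t:ℝ) = -(r:ℝ) by ring, abs_neg,
      abs_of_nonneg (by positivity : (0:ℝ) ≤ (r:ℝ))]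
    ring
  have hw2 : eLpNorm (fun ω => Xt v ((t - r : ℕ) : ℤ) ω - B ω) p μ
      ≤ ENNReal.ofReal (CB * ((r:ℝ) * (n:ℝ)⁻¹)) := by
    rw [hBdef, ← hcast, ← hvu]
    exact hhoelder v hv u hu _
  have hdB_2 : eLpNorm (fun ω => X n (t - r) ω - B ω) 2 μ
      ≤ ENNReal.ofReal (CB * (1 + (r:ℝ)) * (n:ℝ)⁻¹) := by
    have hsplit : (fun ω => X n (t - r) ω - B ω)
        = (fun ω => X n (t - r) ω - Xt v ((t - r : ℕ) : ℤ) ω)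
          + fun ω => Xt v ((t - r : ℕ) : ℤ) ω - B ω := by
      funext ω; simp only [Pi.add_apply]; ring
    rw [hsplit]
    refine le_trans (eLpNorm_add_le
      ((hXmeas n (t-r)).sub (hXtmeas v _)).aestronglyMeasurable
      ((hXtmeas v _).sub (hXtmeas u _)).aestronglyMeasurable one_le_two) ?_
    have e1 : eLpNorm (fun ω => X n (t - r) ω - Xt v ((t - r : ℕ) : ℤ) ω) 2 μ
        ≤ ENNReal.ofReal (CB * (n:ℝ)⁻¹) :=
      le_trans (eLpNorm_le_eLpNorm_of_exponent_le h2p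
        ((hXmeas n (t-r)).sub (hXtmeas v _)).aestronglyMeasurable) hw1
    have e2 : eLpNorm (fun ω => Xt v ((t - r : ℕ) : ℤ) ω - B ω) 2 μ
        ≤ ENNReal.ofReal (CB * ((r:ℝ) * (n:ℝ)⁻¹)) :=
      le_trans (eLpNorm_le_eLpNorm_of_exponent_le h2p
        ((hXtmeas v _).sub (hXtmeas u _)).aestronglyMeasurable) hw2
    refine le_trans (add_le_add e1 e2) ?_
    rw [← ENNReal.ofReal_add (by positivity) (by positivity)]
    apply ENNReal.ofReal_le_ofReal
    ring_nf
    nlinarith [hninv0, hCB.le]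
  -- MemLp of the observed variables
  have hXnt_mem : MemLp (X n t) 2 μ := by
    have hsplit : X n t = (fun ω => X n t ω - A ω) + A := by
      funext ω; simp only [Pi.add_apply]; ring
    refine ⟨(hXmeas n t).aestronglyMeasurable, ?_⟩
    rw [hsplit]
    refine lt_of_le_of_lt (eLpNorm_add_le
      ((hXmeas n t).sub (hXtmeas u _)).aestronglyMeasurable
      (hXtmeas u _).aestronglyMeasurable one_le_two) ?_
    exact lt_of_le_of_lt (add_le_add hdA_2 hA_2)
      (by rw [← ENNReal.ofReal_add (by positivity) hM0]; exact ENNReal.ofReal_lt_top)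
  have hXntr_2 : eLpNorm (X n (t - r)) 2 μ
      ≤ ENNReal.ofReal (M + CB * (1 + (r:ℝ))) := by
    have hsplit : X n (t - r) = (fun ω => X n (t - r) ω - B ω) + B := by
      funext ω; simp only [Pi.add_apply]; ring
    rw [hsplit]
    refine le_trans (eLpNorm_add_le
      ((hXmeas n (t-r)).sub (hXtmeas u _)).aestronglyMeasurable
      (hXtmeas u _).aestronglyMeasurable one_le_two) ?_
    refine le_trans (add_le_add hdB_2 hB_2) ?_
    rw [← ENNReal.ofReal_add (by positivity) hM0]
    apply ENNReal.ofReal_le_ofReal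
    nlinarith [mul_le_one₀ (le_refl (1:ℝ)) hninv0 hninv1, hCB.le,
      mul_le_of_le_one_right (by positivity : (0:ℝ) ≤ CB * (1 + (r:ℝ))) hninv1]
  have hXntr_mem : MemLp (X n (t - r)) 2 μ :=
    ⟨(hXmeas n (t-r)).aestronglyMeasurable,
      lt_of_le_of_lt hXntr_2 ENNReal.ofReal_lt_top⟩
  -- covariance comparison
  have hbound := covar_diff_bound (μ := μ) hXnt_mem hA_mem hXntr_mem hB_mem
    (by positivity : (0:ℝ) ≤ CB * (n:ℝ)⁻¹)
    (by positivity : (0:ℝ) ≤ M + CB * (1 + (r:ℝ)))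
    hM0
    (by positivity : (0:ℝ) ≤ CB * (1 + (r:ℝ)) * (n:ℝ)⁻¹)
    hdA_2 hXntr_2 hA_2 hdB_2
  -- stationarity: covar μ A B = covar μ (Xt u r) (Xt u 0)
  have hstatc : covar μ A B = covar μ (Xt u (r : ℤ)) (Xt u 0) := by
    have := stat_covar (fun s => hXtmeas u s) hstatu (r : ℤ) 0 (t - r)
    rw [hAdef, hBdef]
    have ha' : (r : ℤ) + ((t - r : ℕ) : ℤ) = (t : ℤ) := by rw [hcast]; ring
    have hb' : (0 : ℤ) + ((t - r : ℕ) : ℤ) = (t : ℤ) - (r : ℤ) := by rw [hcast]; ring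
    rw [ha', hb'] at this
    exact this
  rw [← hstatc]
  refine le_trans hbound ?_
  apply le_of_eq
  ring

/-- countable dense sequence in `Icc 0 1` -/
def dseq : ℕ → ℝ := fun k => max 0 (min 1 (((Denumerable.eqv ℚ).symm k : ℚ) : ℝ))

lemma dseq_mem (k : ℕ) : dseq k ∈ Icc (0:ℝ) 1 := by
  constructor
  · exact le_max_left _ _
  · exact max_le (by norm_num) (min_le_left _ _)

lemma dseq_dense {u : ℝ} (hu : u ∈ Icc (0:ℝ) 1) {ε : ℝ} (hε : 0 < ε) :
    ∃ k, |dseq k - u| < ε := by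
  rcases lt_or_eq_of_le hu.2 with h1 | h1
  · obtain ⟨s, hs1, hs2⟩ := exists_rat_btwn (show u < min 1 (u + ε) from lt_min h1 (by linarith))
    refine ⟨(Denumerable.eqv ℚ) s, ?_⟩
    have hd : dseq ((Denumerable.eqv ℚ) s) = (s : ℝ) := by
      unfold dseq
      rw [Equiv.symm_apply_apply]
      rw [min_eq_right (le_of_lt (lt_of_lt_of_le hs2 (min_le_left _ _))),
        max_eq_right (le_trans hu.1 (le_of_lt hs1))]
    rw [hd, abs_of_nonneg (by linarith)]
    have := lt_of_lt_of_le hs2 (min_le_right _ _)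
    linarith
  · obtain ⟨s, hs1, hs2⟩ := exists_rat_btwn (show max 0 (1 - ε) < 1 from
      max_lt (by norm_num) (by linarith))
    refine ⟨(Denumerable.eqv ℚ) s, ?_⟩
    have h0s : (0:ℝ) ≤ (s:ℝ) := le_of_lt (lt_of_le_of_lt (le_max_left _ _) hs1)
    have hd : dseq ((Denumerable.eqv ℚ) s) = (s : ℝ) := by
      unfold dseq
      rw [Equiv.symm_apply_apply]
      rw [min_eq_right (le_of_lt hs2), max_eq_right h0s]
    subst h1
    rw [hd, abs_of_nonpos (by linarith)]
    have := lt_of_le_of_lt (le_max_right 0 (1 - ε)) hs1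
    linarith

/-- partial maxima over the dense sequence -/
def pmax (f : ℝ → Ω → ℝ) : ℕ → Ω → ℝ := fun N ω =>
  (Finset.range (N + 1)).sup' ⟨0, Finset.mem_range.mpr (Nat.succ_pos _)⟩
    fun k => |f (dseq k) ω|

lemma pmax_aemeasurable {f : ℝ → Ω → ℝ}
    (hm : ∀ u ∈ Icc (0:ℝ) 1, AEMeasurable (f u) μ) (N : ℕ) :
    AEMeasurable (pmax f N) μ := by
  induction N with
  | zero =>
    have : pmax f 0 = fun ω => |f (dseq 0) ω| := by
      funext ω; unfold pmax; simp
    rw [this]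
    exact continuous_abs.measurable.comp_aemeasurable (hm _ (dseq_mem 0))
  | succ N ih =>
    have : pmax f (N + 1) = fun ω => max (pmax f N ω) |f (dseq (N + 1)) ω| := by
      funext ω; unfold pmax
      apply le_antisymm
      · apply Finset.sup'_le
        intro k hk
        rcases Nat.lt_succ_iff_lt_or_eq.mp (Finset.mem_range.mp hk) with h | h
        · exact le_sup_of_le_left (Finset.le_sup' (fun k => |f (dseq k) ω|) (Finset.mem_range.mpr h))
        · subst h; exact le_sup_right
      · apply sup_le
        · apply Finset.sup'_le
          intro k hk
          exact Finset.le_sup' (fun k => |f (dseq k) ω|) (Finset.mem_range.mpr (Nat.lt_succ_of_lt (Finset.mem_range.mp hk)))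
        · exact Finset.le_sup' (fun k => |f (dseq k) ω|) (Finset.mem_range.mpr (Nat.lt_succ_self (N+1)))
    rw [this]
    exact ih.sup (continuous_abs.measurable.comp_aemeasurable (hm _ (dseq_mem (N+1))))

lemma abs_le_csup {φ : ℝ → ℝ} (hc : ContinuousOn φ (Icc (0:ℝ) 1)) {v : ℝ}
    (hv : v ∈ Icc (0:ℝ) 1) : |φ v| ≤ ⨆ u : Icc (0:ℝ) 1, |φ (u:ℝ)| := by
  have hbdd : BddAbove (range fun u : Icc (0:ℝ) 1 => |φ (u:ℝ)|) := by
    have himg : (range fun u : Icc (0:ℝ) 1 => |φ (u:ℝ)|) = (fun x => |φ x|) '' Icc (0:ℝ) 1 := by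
      ext y
      constructor
      · rintro ⟨u, rfl⟩
        exact ⟨u, u.2, rfl⟩
      · rintro ⟨x, hx, rfl⟩
        exact ⟨⟨x, hx⟩, rfl⟩
    rw [himg]
    exact (isCompact_Icc.image_of_continuousOn
      (continuous_abs.comp_continuousOn hc)).bddAbove
  exact le_ciSup hbdd ⟨v, hv⟩

lemma aemeasurable_csup {f : ℝ → Ω → ℝ}
    (hm : ∀ u ∈ Icc (0:ℝ) 1, AEMeasurable (f u) μ)
    (hc : ∀ᵐ ω ∂μ, ContinuousOn (fun u => f u ω) (Icc (0:ℝ) 1)) :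
    AEMeasurable (fun ω => ⨆ u : Icc (0:ℝ) 1, |f (u:ℝ) ω|) μ := by
  haveI : Nonempty (Icc (0:ℝ) 1) := ⟨⟨0, le_refl 0, zero_le_one⟩⟩
  apply aemeasurable_of_tendsto_metrizable_ae' (pmax_aemeasurable hm)
  filter_upwards [hc] with ω hcω
  have hle : ∀ w ∈ Icc (0:ℝ) 1, |f w ω| ≤ ⨆ u : Icc (0:ℝ) 1, |f (u:ℝ) ω| :=
    fun w hw => abs_le_csup hcω hw
  set S := ⨆ u : Icc (0:ℝ) 1, |f (u:ℝ) ω| with hS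
  have hgle : ∀ N, pmax f N ω ≤ S := by
    intro N
    apply Finset.sup'_le
    intro k _
    exact hle _ (dseq_mem k)
  have hmono : Monotone (fun N => pmax f N ω) := by
    intro a b hab
    apply Finset.sup'_mono
    intro x hx
    simp only [Finset.mem_range] at hx ⊢
    omega
  have hb2 : BddAbove (range fun N => pmax f N ω) := by
    refine ⟨S, ?_⟩
    rintro x ⟨N, rfl⟩
    exact hgle N
  have htend : Tendsto (fun N => pmax f N ω) atTop (𝓝 (⨆ N, pmax f N ω)) :=
    tendsto_atTop_ciSup hmono hb2
  have hLS : (⨆ N, pmax f N ω) = S := by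
    apply le_antisymm (ciSup_le hgle)
    apply ciSup_le
    rintro ⟨v, hv⟩
    show |f v ω| ≤ ⨆ N, pmax f N ω
    by_contra hlt
    push_neg at hlt
    set L := ⨆ N, pmax f N ω with hLdef
    set ε := (|f v ω| - L) / 2 with hεdef
    have hε0 : 0 < ε := by
      rw [hεdef]
      linarith
    have hcv := hcω v hv
    rw [Metric.continuousWithinAt_iff] at hcv
    obtain ⟨δ, hδ0, hδ⟩ := hcv ε hε0
    obtain ⟨k, hk⟩ := dseq_dense hv hδ0
    have h1 : |f (dseq k) ω - f v ω| < ε := by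
      have := hδ (dseq_mem k) (show dist (dseq k) v < δ by rwa [Real.dist_eq])
      rwa [Real.dist_eq] at this
    have h2 : |f (dseq k) ω| ≤ L := by
      refine le_trans ?_ (le_ciSup hb2 k)
      exact Finset.le_sup' (fun j => |f (dseq j) ω|)
        (Finset.mem_range.mpr (Nat.lt_succ_self k))
    have h3 : |f v ω| ≤ |f (dseq k) ω| + ε := by
      have h4 := abs_sub_abs_le_abs_sub (f v ω) (f (dseq k) ω)
      have h1' : |f v ω - f (dseq k) ω| < ε := by rwa [abs_sub_comm] at h1
      linarith
    rw [hεdef] at h3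
    linarith
  rwa [hLS] at htend

lemma aemeasurable_of_hasDerivWithinAt {Xt DX : ℝ → Ω → ℝ}
    (hXtmeas : ∀ u, Measurable (Xt u))
    (hderiv : ∀ᵐ ω ∂μ, ∀ v ∈ Icc (0:ℝ) 1,
      HasDerivWithinAt (fun w => Xt w ω) (DX v ω) (Icc (0:ℝ) 1) v)
    {u : ℝ} (hu : u ∈ Icc (0:ℝ) 1) : AEMeasurable (DX u) μ := by
  set s : ℝ := if u ≤ 1/2 then 1 else -1 with hsdef
  set w : ℕ → ℝ := fun k => u + s / (k + 2) with hwdef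
  have hk2 : ∀ k : ℕ, (0:ℝ) < (k:ℝ) + 2 := fun k => by positivity
  have hk2' : ∀ k : ℕ, (1:ℝ) / ((k:ℝ) + 2) ≤ 1/2 := by
    intro k
    rw [div_le_div_iff₀ (hk2 k) (by norm_num)]
    have : (0:ℝ) ≤ (k:ℝ) := Nat.cast_nonneg k
    linarith
  have hwmem : ∀ k, w k ∈ Icc (0:ℝ) 1 := by
    intro k
    rw [hwdef]
    by_cases h : u ≤ 1/2
    · rw [hsdef, if_pos h]
      constructor
      · have : (0:ℝ) < 1 / ((k:ℝ)+2) := by positivity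
        have := hu.1
        simp only []
        linarith
      · have := hk2' k
        simp only []
        linarith
    · rw [hsdef, if_neg h]
      push_neg at h
      constructor
      · have := hk2' k
        have h2 : -1 / ((k:ℝ)+2) = -(1 / ((k:ℝ)+2)) := by ring
        simp only [h2]
        linarith
      · have : (0:ℝ) < 1 / ((k:ℝ)+2) := by positivity
        have h2 : -1 / ((k:ℝ)+2) = -(1 / ((k:ℝ)+2)) := by ring
        have := hu.2
        simp only [h2]
        linarith
  have hwne : ∀ k, w k ≠ u := by
    intro k
    rw [hwdef]
    have hs0 : s ≠ 0 := by
      rw [hsdef]; split <;> norm_num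
    have : s / ((k:ℝ)+2) ≠ 0 := div_ne_zero hs0 (ne_of_gt (hk2 k))
    simp only []
    intro hcon
    apply this
    linarith [hcon]
  have hwtend : Tendsto w atTop (𝓝 u) := by
    rw [hwdef]
    have h1 : Tendsto (fun k : ℕ => ((k:ℝ) + 2)) atTop atTop :=
      tendsto_atTop_add_const_right _ 2 tendsto_natCast_atTop_atTop
    have h2 : Tendsto (fun k : ℕ => s / ((k:ℝ) + 2)) atTop (𝓝 0) := by
      simp_rw [div_eq_mul_inv]
      have := (tendsto_inv_atTop_zero.comp h1).const_mul s
      simpa using this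
    have := h2.const_add u
    simpa using this
  have hwl : Tendsto w atTop (𝓝[Icc (0:ℝ) 1 \ {u}] u) := by
    rw [tendsto_nhdsWithin_iff]
    exact ⟨hwtend, Eventually.of_forall fun k => ⟨hwmem k, hwne k⟩⟩
  have hmeas : ∀ k : ℕ, AEMeasurable (fun ω => slope (fun x => Xt x ω) u (w k)) μ := by
    intro k
    have : (fun ω => slope (fun x => Xt x ω) u (w k))
        = fun ω => (Xt (w k) ω - Xt u ω) / (w k - u) := by
      funext ω
      exact slope_def_field _ _ _
    rw [this]
    exact (((hXtmeas (w k)).sub (hXtmeas u)).div_const _).aemeasurable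
  apply aemeasurable_of_tendsto_metrizable_ae' hmeas
  filter_upwards [hderiv] with ω hω
  have hs := hasDerivWithinAt_iff_tendsto_slope.mp (hω u hu)
  exact hs.comp hwl

lemma hasDerivWithinAt_integral {F F' : ℝ → Ω → ℝ} {S : Ω → ℝ} {u : ℝ}
    (hu : u ∈ Icc (0:ℝ) 1)
    (hFint : ∀ v ∈ Icc (0:ℝ) 1, Integrable (F v) μ)
    (hS : Integrable S μ)
    (hae : ∀ᵐ ω ∂μ, (∀ v ∈ Icc (0:ℝ) 1,
        HasDerivWithinAt (fun x => F x ω) (F' v ω) (Icc (0:ℝ) 1) v) ∧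
      ∀ v ∈ Icc (0:ℝ) 1, |F' v ω| ≤ S ω) :
    HasDerivWithinAt (fun v => ∫ ω, F v ω ∂μ) (∫ ω, F' u ω ∂μ) (Icc (0:ℝ) 1) u := by
  rw [hasDerivWithinAt_iff_tendsto_slope]
  have hmain : Tendsto (fun v => ∫ ω, slope (fun x => F x ω) u v ∂μ)
      (𝓝[Icc (0:ℝ) 1 \ {u}] u) (𝓝 (∫ ω, F' u ω ∂μ)) := by
    apply tendsto_integral_filter_of_dominated_convergence S
    · filter_upwards [self_mem_nhdsWithin] with v hv
      have : (fun ω => slope (fun x => F x ω) u v)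
          = fun ω => (F v ω - F u ω) / (v - u) := by
        funext ω; exact slope_def_field _ _ _
      rw [this]
      exact (((hFint v hv.1).sub (hFint u hu)).div_const _).aestronglyMeasurable
    · filter_upwards [self_mem_nhdsWithin] with v hv
      filter_upwards [hae] with ω hω
      have hmvt := Convex.norm_image_sub_le_of_norm_hasDerivWithin_le
        (f := fun x => F x ω) (f' := fun x => F' x ω) (s := Icc (0:ℝ) 1) (C := S ω)
        hω.1 (fun x hx => by simpa [Real.norm_eq_abs] using hω.2 x hx)
        (convex_Icc 0 1) hu hv.1
      rw [slope_def_field]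
      rw [Real.norm_eq_abs, abs_div]
      rcases eq_or_ne v u with h | h
      · exfalso; exact hv.2 h
      · rw [div_le_iff₀ (by
          rw [abs_pos]
          exact sub_ne_zero.mpr h)]
        simpa [Real.norm_eq_abs] using hmvt
    · exact hS
    · filter_upwards [hae] with ω hω
      exact hasDerivWithinAt_iff_tendsto_slope.mp (hω.1 u hu)
  apply hmain.congr'
  filter_upwards [self_mem_nhdsWithin] with v hv
  simp_rw [slope_def_field]
  rw [integral_div, integral_sub (hFint v hv.1) (hFint u hu)]

lemma continuousOn_integral_of_dominated {F : ℝ → Ω → ℝ} {S : Ω → ℝ}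
    (hFmeas : ∀ v ∈ Icc (0:ℝ) 1, AEStronglyMeasurable (F v) μ)
    (hS : Integrable S μ)
    (hae : ∀ᵐ ω ∂μ, ContinuousOn (fun v => F v ω) (Icc (0:ℝ) 1) ∧
      ∀ v ∈ Icc (0:ℝ) 1, |F v ω| ≤ S ω) :
    ContinuousOn (fun v => ∫ ω, F v ω ∂μ) (Icc (0:ℝ) 1) := by
  intro u hu
  unfold ContinuousWithinAt
  apply tendsto_integral_filter_of_dominated_convergence S
  · filter_upwards [self_mem_nhdsWithin] with v hv
    exact hFmeas v hv
  · filter_upwards [self_mem_nhdsWithin] with v hv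
    filter_upwards [hae] with ω hω
    simpa [Real.norm_eq_abs] using hω.2 v hv
  · exact hS
  · filter_upwards [hae] with ω hω
    exact hω.1 u hu


end Helpers

/-- **Covariance expansion** (Corollary 3.10): under (S1) with `α = 1`, (S2), (S3) with
`q ≥ 2`, for fixed lag `r > 0` and `γ(u,r) := Cov(X̃_t(u), X̃_{t−r}(u))`:
`Cov(X_{t,n}, X_{t−r,n}) = γ(t/n, r) + O(n⁻¹)` uniformly in `t`, and `u ↦ γ(u,r)` is
continuously differentiable with derivative
`Cov(∂_u X̃_0(u), X̃_r(u)) + Cov(X̃_0(u), ∂_u X̃_r(u))`. -/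
theorem covariance_expansion {Ω : Type*} [MeasurableSpace Ω] (μ : Measure Ω)
    [IsProbabilityMeasure μ]
    (X : ℕ → ℕ → Ω → ℝ) (Xt : ℝ → ℤ → Ω → ℝ) (DX : ℝ → ℤ → Ω → ℝ)
    (hXmeas : ∀ n t, Measurable (X n t))
    (hXtmeas : ∀ u t, Measurable (Xt u t))
    (hstat : ∀ u ∈ Icc (0:ℝ) 1, StatErg μ (fun t => Xt u t))
    (r : ℕ) (hr : 0 < r)
    (q : ℝ) (hq : 2 ≤ q) (CB : ℝ) (hCB : 0 < CB)
    -- (S1) with α = 1 :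
    (hmom : ∃ M : ℝ, ∀ u ∈ Icc (0:ℝ) 1,
      eLpNorm (Xt u 0) (ENNReal.ofReal q) μ ≤ ENNReal.ofReal M)
    (hhoelder : ∀ u ∈ Icc (0:ℝ) 1, ∀ v ∈ Icc (0:ℝ) 1, ∀ t : ℤ,
      eLpNorm (fun ω => Xt u t ω - Xt v t ω) (ENNReal.ofReal q) μ
        ≤ ENNReal.ofReal (CB * |u - v|))
    (happrox : ∀ n : ℕ, 1 ≤ n → ∀ t : ℕ, 1 ≤ t → t ≤ n →
      eLpNorm (fun ω => X n t ω - Xt ((t : ℝ) / (n : ℝ)) (t : ℤ) ω) (ENNReal.ofReal q) μ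
        ≤ ENNReal.ofReal (CB * (n : ℝ)⁻¹))
    -- (S2) :
    (hcont : ∀ t : ℤ, ∀ᵐ ω ∂μ, ContinuousOn (fun u => Xt u t ω) (Icc (0:ℝ) 1))
    (hsupmom : ∀ t : ℤ,
      eLpNorm (fun ω => ⨆ u : Icc (0:ℝ) 1, |Xt (u : ℝ) t ω|) (ENNReal.ofReal q) μ < ⊤)
    -- (S3) :
    (hderiv : ∀ t : ℤ, ∀ᵐ ω ∂μ,
      (∀ u ∈ Icc (0:ℝ) 1,
        HasDerivWithinAt (fun v => Xt v t ω) (DX u t ω) (Icc (0:ℝ) 1) u) ∧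
      ContinuousOn (fun u => DX u t ω) (Icc (0:ℝ) 1))
    (hDmom : ∀ t : ℤ,
      eLpNorm (fun ω => ⨆ u : Icc (0:ℝ) 1, |DX (u : ℝ) t ω|) (ENNReal.ofReal q) μ < ⊤) :
    (∃ C : ℝ, 0 < C ∧ ∀ n : ℕ, 1 ≤ n → ∀ t : ℕ, r < t → t ≤ n →
      |covar μ (X n t) (X n (t - r))
          - covar μ (Xt ((t : ℝ) / (n : ℝ)) (r : ℤ)) (Xt ((t : ℝ) / (n : ℝ)) 0)|
        ≤ C * (n : ℝ)⁻¹) ∧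
    (∀ u ∈ Icc (0:ℝ) 1,
      HasDerivWithinAt (fun v => covar μ (Xt v (r : ℤ)) (Xt v 0))
        (covar μ (DX u 0) (Xt u (r : ℤ)) + covar μ (Xt u 0) (DX u (r : ℤ)))
        (Icc (0:ℝ) 1) u) ∧
    ContinuousOn (fun u => covar μ (DX u 0) (Xt u (r : ℤ))
      + covar μ (Xt u 0) (DX u (r : ℤ))) (Icc (0:ℝ) 1) := by
  obtain ⟨M, hM⟩ := hmom
  have h2p : (2 : ENNReal) ≤ ENNReal.ofReal q := two_le_ofReal_q hq
  -- derivative hypotheses split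
  have hD1 : ∀ t : ℤ, ∀ᵐ ω ∂μ, ∀ u ∈ Icc (0:ℝ) 1,
      HasDerivWithinAt (fun v => Xt v t ω) (DX u t ω) (Icc (0:ℝ) 1) u :=
    fun t => (hderiv t).mono fun ω h => h.1
  have hD2 : ∀ t : ℤ, ∀ᵐ ω ∂μ, ContinuousOn (fun u => DX u t ω) (Icc (0:ℝ) 1) :=
    fun t => (hderiv t).mono fun ω h => h.2
  -- sup processes
  have hSXmeas : ∀ t : ℤ,
      AEMeasurable (fun ω => ⨆ u : Icc (0:ℝ) 1, |Xt (u:ℝ) t ω|) μ :=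
    fun t => aemeasurable_csup (fun u _ => (hXtmeas u t).aemeasurable) (hcont t)
  have hDXmeas : ∀ u ∈ Icc (0:ℝ) 1, ∀ t : ℤ, AEMeasurable (DX u t) μ :=
    fun u hu t => aemeasurable_of_hasDerivWithinAt (fun v => hXtmeas v t) (hD1 t) hu
  have hSDmeas : ∀ t : ℤ,
      AEMeasurable (fun ω => ⨆ u : Icc (0:ℝ) 1, |DX (u:ℝ) t ω|) μ :=
    fun t => aemeasurable_csup (fun u hu => hDXmeas u hu t) (hD2 t)
  have hSX2 : ∀ t : ℤ,
      MemLp (fun ω => ⨆ u : Icc (0:ℝ) 1, |Xt (u:ℝ) t ω|) 2 μ := fun t =>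
    ⟨(hSXmeas t).aestronglyMeasurable,
      lt_of_le_of_lt (eLpNorm_le_eLpNorm_of_exponent_le h2p
        (hSXmeas t).aestronglyMeasurable) (hsupmom t)⟩
  have hSD2 : ∀ t : ℤ,
      MemLp (fun ω => ⨆ u : Icc (0:ℝ) 1, |DX (u:ℝ) t ω|) 2 μ := fun t =>
    ⟨(hSDmeas t).aestronglyMeasurable,
      lt_of_le_of_lt (eLpNorm_le_eLpNorm_of_exponent_le h2p
        (hSDmeas t).aestronglyMeasurable) (hDmom t)⟩
  -- pointwise domination
  have hXbd : ∀ t : ℤ, ∀ᵐ ω ∂μ, ∀ v ∈ Icc (0:ℝ) 1,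
      |Xt v t ω| ≤ ⨆ u : Icc (0:ℝ) 1, |Xt (u:ℝ) t ω| := by
    intro t
    filter_upwards [hcont t] with ω hc
    exact fun v hv => abs_le_csup hc hv
  have hDbd : ∀ t : ℤ, ∀ᵐ ω ∂μ, ∀ v ∈ Icc (0:ℝ) 1,
      |DX v t ω| ≤ ⨆ u : Icc (0:ℝ) 1, |DX (u:ℝ) t ω| := by
    intro t
    filter_upwards [hD2 t] with ω hc
    exact fun v hv => abs_le_csup hc hv
  -- MemLp of the processes at fixed parameter
  have hXt2 : ∀ v ∈ Icc (0:ℝ) 1, ∀ t : ℤ, MemLp (Xt v t) 2 μ := by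
    intro v hv t
    refine MemLp.of_le (hSX2 t) (hXtmeas v t).aestronglyMeasurable ?_
    filter_upwards [hXbd t] with ω h
    exact le_trans (h v hv) (le_abs_self _)
  have hDX2 : ∀ v ∈ Icc (0:ℝ) 1, ∀ t : ℤ, MemLp (DX v t) 2 μ := by
    intro v hv t
    refine MemLp.of_le (hSD2 t) (hDXmeas v hv t).aestronglyMeasurable ?_
    filter_upwards [hDbd t] with ω h
    exact le_trans (h v hv) (le_abs_self _)
  -- derivative of the product integral
  have hPderiv : ∀ u ∈ Icc (0:ℝ) 1,
      HasDerivWithinAt (fun v => ∫ ω, Xt v (r:ℤ) ω * Xt v 0 ω ∂μ)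
        (∫ ω, (DX u (r:ℤ) ω * Xt u 0 ω + Xt u (r:ℤ) ω * DX u 0 ω) ∂μ)
        (Icc (0:ℝ) 1) u := by
    intro u hu
    apply hasDerivWithinAt_integral hu
    · intro v hv
      exact L2.integrable_mul' (hXt2 v hv (r:ℤ)) (hXt2 v hv 0)
    · exact (L2.integrable_mul' (hSD2 (r:ℤ)) (hSX2 0)).add
        (L2.integrable_mul' (hSX2 (r:ℤ)) (hSD2 0))
    · filter_upwards [hD1 (r:ℤ), hD1 0, hXbd (r:ℤ), hXbd 0, hDbd (r:ℤ), hDbd 0] with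
        ω h1 h2 hbr hb0 hdr hd0
      constructor
      · intro v hv
        exact (h1 v hv).mul (h2 v hv)
      · intro v hv
        calc |DX v (r:ℤ) ω * Xt v 0 ω + Xt v (r:ℤ) ω * DX v 0 ω|
            ≤ |DX v (r:ℤ) ω * Xt v 0 ω| + |Xt v (r:ℤ) ω * DX v 0 ω| := abs_add_le _ _
          _ = |DX v (r:ℤ) ω| * |Xt v 0 ω| + |Xt v (r:ℤ) ω| * |DX v 0 ω| := by
              rw [abs_mul, abs_mul]
          _ ≤ (⨆ u : Icc (0:ℝ) 1, |DX (u:ℝ) (r:ℤ) ω|) * (⨆ u : Icc (0:ℝ) 1, |Xt (u:ℝ) 0 ω|)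
              + (⨆ u : Icc (0:ℝ) 1, |Xt (u:ℝ) (r:ℤ) ω|) * ⨆ u : Icc (0:ℝ) 1, |DX (u:ℝ) 0 ω| :=
            add_le_add
              (mul_le_mul (hdr v hv) (hb0 v hv) (abs_nonneg _)
                (le_trans (abs_nonneg _) (hdr v hv)))
              (mul_le_mul (hbr v hv) (hd0 v hv) (abs_nonneg _)
                (le_trans (abs_nonneg _) (hbr v hv)))
  -- derivative of the mean integrals
  have hmderiv : ∀ t : ℤ, ∀ u ∈ Icc (0:ℝ) 1,
      HasDerivWithinAt (fun v => ∫ ω, Xt v t ω ∂μ) (∫ ω, DX u t ω ∂μ)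
        (Icc (0:ℝ) 1) u := by
    intro t u hu
    apply hasDerivWithinAt_integral hu
    · intro v hv
      exact (hXt2 v hv t).integrable one_le_two
    · exact (hSD2 t).integrable one_le_two
    · filter_upwards [hD1 t, hDbd t] with ω h1 hd
      exact ⟨fun v hv => h1 v hv, fun v hv => hd v hv⟩
  -- continuity facts
  have hcontInt : ∀ t : ℤ, ContinuousOn (fun v => ∫ ω, Xt v t ω ∂μ) (Icc (0:ℝ) 1) := by
    intro t
    apply continuousOn_integral_of_dominated
      (fun v hv => (hXtmeas v t).aestronglyMeasurable) ((hSX2 t).integrable one_le_two)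
    filter_upwards [hcont t, hXbd t] with ω h1 h2
    exact ⟨h1, h2⟩
  have hcontED : ∀ t : ℤ, ContinuousOn (fun v => ∫ ω, DX v t ω ∂μ) (Icc (0:ℝ) 1) := by
    intro t
    apply continuousOn_integral_of_dominated
      (fun v hv => (hDXmeas v hv t).aestronglyMeasurable) ((hSD2 t).integrable one_le_two)
    filter_upwards [hD2 t, hDbd t] with ω h1 h2
    exact ⟨h1, h2⟩
  have hcontQ1 : ContinuousOn (fun v => ∫ ω, DX v 0 ω * Xt v (r:ℤ) ω ∂μ) (Icc (0:ℝ) 1) := by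
    apply continuousOn_integral_of_dominated
      (fun v hv => ((hDXmeas v hv 0).mul (hXtmeas v (r:ℤ)).aemeasurable).aestronglyMeasurable)
      (L2.integrable_mul' (hSD2 0) (hSX2 (r:ℤ)))
    filter_upwards [hD2 0, hcont (r:ℤ), hDbd 0, hXbd (r:ℤ)] with ω h1 h2 h3 h4
    refine ⟨h1.mul h2, fun v hv => ?_⟩
    rw [Pi.mul_apply, abs_mul]
    exact mul_le_mul (h3 v hv) (h4 v hv) (abs_nonneg _) (le_trans (abs_nonneg _) (h3 v hv))
  have hcontQ2 : ContinuousOn (fun v => ∫ ω, Xt v 0 ω * DX v (r:ℤ) ω ∂μ) (Icc (0:ℝ) 1) := by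
    apply continuousOn_integral_of_dominated
      (fun v hv => ((hXtmeas v 0).aemeasurable.mul (hDXmeas v hv (r:ℤ))).aestronglyMeasurable)
      (L2.integrable_mul' (hSX2 0) (hSD2 (r:ℤ)))
    filter_upwards [hcont 0, hD2 (r:ℤ), hXbd 0, hDbd (r:ℤ)] with ω h1 h2 h3 h4
    refine ⟨h1.mul h2, fun v hv => ?_⟩
    rw [Pi.mul_apply, abs_mul]
    exact mul_le_mul (h3 v hv) (h4 v hv) (abs_nonneg _) (le_trans (abs_nonneg _) (h3 v hv))
  refine ⟨?_, ?_, ?_⟩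
  · -- Part 1
    have hM' : ∀ u ∈ Icc (0:ℝ) 1,
        eLpNorm (Xt u 0) (ENNReal.ofReal q) μ ≤ ENNReal.ofReal (max M 0) :=
      fun u hu => le_trans (hM u hu) (ENNReal.ofReal_le_ofReal (le_max_left _ _))
    exact part1 hXmeas hXtmeas hstat r hr q hq CB hCB (max M 0) (le_max_right _ _)
      hM' hhoelder happrox
  · -- Part 2: differentiability
    intro u hu
    have heq : ∀ v ∈ Icc (0:ℝ) 1, covar μ (Xt v (r:ℤ)) (Xt v 0)
        = (∫ ω, Xt v (r:ℤ) ω * Xt v 0 ω ∂μ)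
          - (∫ ω, Xt v (r:ℤ) ω ∂μ) * ∫ ω, Xt v 0 ω ∂μ :=
      fun v hv => covar_eq_sub (hXt2 v hv (r:ℤ)) (hXt2 v hv 0)
    have hder : HasDerivWithinAt
        (fun v => (∫ ω, Xt v (r:ℤ) ω * Xt v 0 ω ∂μ)
          - (∫ ω, Xt v (r:ℤ) ω ∂μ) * ∫ ω, Xt v 0 ω ∂μ)
        ((∫ ω, (DX u (r:ℤ) ω * Xt u 0 ω + Xt u (r:ℤ) ω * DX u 0 ω) ∂μ)
          - ((∫ ω, DX u (r:ℤ) ω ∂μ) * (∫ ω, Xt u 0 ω ∂μ)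
             + (∫ ω, Xt u (r:ℤ) ω ∂μ) * ∫ ω, DX u 0 ω ∂μ))
        (Icc (0:ℝ) 1) u :=
      (hPderiv u hu).sub ((hmderiv (r:ℤ) u hu).mul (hmderiv 0 u hu))
    have hval : covar μ (DX u 0) (Xt u (r:ℤ)) + covar μ (Xt u 0) (DX u (r:ℤ))
        = (∫ ω, (DX u (r:ℤ) ω * Xt u 0 ω + Xt u (r:ℤ) ω * DX u 0 ω) ∂μ)
          - ((∫ ω, DX u (r:ℤ) ω ∂μ) * (∫ ω, Xt u 0 ω ∂μ)
             + (∫ ω, Xt u (r:ℤ) ω ∂μ) * ∫ ω, DX u 0 ω ∂μ) := by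
      rw [covar_eq_sub (hDX2 u hu 0) (hXt2 u hu (r:ℤ)),
        covar_eq_sub (hXt2 u hu 0) (hDX2 u hu (r:ℤ))]
      have hsplit : ∫ ω, (DX u (r:ℤ) ω * Xt u 0 ω + Xt u (r:ℤ) ω * DX u 0 ω) ∂μ
          = (∫ ω, DX u (r:ℤ) ω * Xt u 0 ω ∂μ) + ∫ ω, Xt u (r:ℤ) ω * DX u 0 ω ∂μ :=
        integral_add (L2.integrable_mul' (hDX2 u hu (r:ℤ)) (hXt2 u hu 0))
          (L2.integrable_mul' (hXt2 u hu (r:ℤ)) (hDX2 u hu 0))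
      have hc1 : ∫ ω, DX u 0 ω * Xt u (r:ℤ) ω ∂μ = ∫ ω, Xt u (r:ℤ) ω * DX u 0 ω ∂μ :=
        integral_congr_ae (Eventually.of_forall fun ω => mul_comm _ _)
      have hc2 : ∫ ω, Xt u 0 ω * DX u (r:ℤ) ω ∂μ = ∫ ω, DX u (r:ℤ) ω * Xt u 0 ω ∂μ :=
        integral_congr_ae (Eventually.of_forall fun ω => mul_comm _ _)
      rw [hsplit, hc1, hc2]
      ring
    rw [hval]
    exact hder.congr (fun v hv => heq v hv) (heq u hu)
  · -- Part 3: continuity of the derivative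
    apply ContinuousOn.congr
      ((hcontQ1.sub ((hcontED 0).mul (hcontInt (r:ℤ)))).add
        (hcontQ2.sub ((hcontInt 0).mul (hcontED (r:ℤ)))))
    intro u hu
    show covar μ (DX u 0) (Xt u (r:ℤ)) + covar μ (Xt u 0) (DX u (r:ℤ))
      = (∫ ω, DX u 0 ω * Xt u (r:ℤ) ω ∂μ
          - (∫ ω, DX u 0 ω ∂μ) * ∫ ω, Xt u (r:ℤ) ω ∂μ)
        + (∫ ω, Xt u 0 ω * DX u (r:ℤ) ω ∂μ
          - (∫ ω, Xt u 0 ω ∂μ) * ∫ ω, DX u (r:ℤ) ω ∂μ)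
    rw [covar_eq_sub (hDX2 u hu 0) (hXt2 u hu (r:ℤ)),
      covar_eq_sub (hXt2 u hu 0) (hDX2 u hu (r:ℤ))]
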